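/- In the monopoly setting, if the trivial partition {G} is revenue-maximizing, then p^1 + p^2 ≤ 3·V̄1(B,G). -/
import Mathlib


open Finset

variable {B G S : Type*} [Fintype B] [Fintype G] [Fintype S]
variable [DecidableEq B] [DecidableEq G] [DecidableEq S]

/-- `v_b(Ḡ)`: buyer `b`'s total valuation of the variants in `Ḡ`. -/
def vsum (v : B → G → ℕ) (b : B) (Gb : Finset G) : ℕ := ∑ g ∈ Gb, v b g

/-- `V̄1(B̄,Ḡ)`: the largest value among `(v_b(Ḡ))_{b∈B̄}` (`0` if `B̄ = ∅`). -/
def V1 (v : B → G → ℕ) (Bb : Finset B) (Gb : Finset G) : ℕ :=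
  Bb.sup (fun b => vsum v b Gb)

/-- `V̄2(B̄,Ḡ)`: the second-largest value, counted with multiplicity
(`0` if `|B̄| ≤ 1`).  It equals the minimum, over removal of one buyer,
of the maximum over the remaining buyers. -/
def V2 (v : B → G → ℕ) (Bb : Finset B) (Gb : Finset G) : ℕ :=
  if h : Bb.Nonempty then Bb.inf' h (fun b => V1 v (Bb.erase b) Gb) else 0

/-- The set of buyers choosing seller `s` under the assignment `σ`. -/
def buyersOf (σ : B → S) (s : S) : Finset B := univ.filter (fun b => σ b = s)

/-- Buyer `b`'s utility in the multi-seller game. -/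
def ubuyer (v : B → G → ℕ) (τ : S → Finpartition (univ : Finset G)) (σ : B → S) (b : B) : ℚ :=
  (Fintype.card G : ℚ)⁻¹ *
    ∑ Gb ∈ (τ (σ b)).parts, max ((vsum v b Gb : ℚ) - (V2 v (buyersOf σ (σ b)) Gb : ℚ)) 0

/-- Seller `s`'s utility in the multi-seller game. -/
def useller (v : B → G → ℕ) (τ : S → Finpartition (univ : Finset G)) (σ : B → S) (s : S) : ℚ :=
  (Fintype.card G : ℚ)⁻¹ * ∑ Gb ∈ (τ s).parts, (V2 v (buyersOf σ s) Gb : ℚ)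

/-- Social welfare in the multi-seller game. -/
def SWm (v : B → G → ℕ) (τ : S → Finpartition (univ : Finset G)) (σ : B → S) : ℚ :=
  ((Fintype.card S : ℚ) * (Fintype.card G : ℚ))⁻¹ *
    ∑ s : S, ∑ Gb ∈ (τ s).parts, (V1 v (buyersOf σ s) Gb : ℚ)

/-- Social welfare in the single-seller (monopoly) game. -/
def SW1 (v : B → G → ℕ) (π : Finpartition (univ : Finset G)) : ℚ :=
  (Fintype.card G : ℚ)⁻¹ * ∑ Gb ∈ π.parts, (V1 v (univ : Finset B) Gb : ℚ)

/-- The monopolist's revenue. -/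
def rev1 (v : B → G → ℕ) (π : Finpartition (univ : Finset G)) : ℚ :=
  (Fintype.card G : ℚ)⁻¹ * ∑ Gb ∈ π.parts, (V2 v (univ : Finset B) Gb : ℚ)

/-- Buyer `b`'s utility in the monopoly game. -/
def ub1 (v : B → G → ℕ) (π : Finpartition (univ : Finset G)) (b : B) : ℚ :=
  (Fintype.card G : ℚ)⁻¹ *
    ∑ Gb ∈ π.parts, max ((vsum v b Gb : ℚ) - (V2 v (univ : Finset B) Gb : ℚ)) 0

/-- `π` refines `π̂`: every block of `π̂` is a union of blocks of `π`. -/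
def IsRefinement (π πhat : Finpartition (univ : Finset G)) : Prop :=
  ∀ t ∈ πhat.parts, ∃ P ⊆ π.parts, t = P.sup id

/-- `σ` is a (pure) Nash equilibrium of the buyers' subgame induced by `τ`. -/
def IsNash (v : B → G → ℕ) (τ : S → Finpartition (univ : Finset G)) (σ : B → S) : Prop :=
  ∀ (b : B) (s : S), ubuyer v τ (Function.update σ b s) b ≤ ubuyer v τ σ b

/-- `p^i(G)`: the number of goods demanded by at least `i` buyers. -/
def pdem (v : B → G → ℕ) (i : ℕ) : ℕ :=
  (univ.filter (fun g : G => i ≤ ∑ b : B, v b g)).card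

/-- The trivial (indiscrete) partition `{G}`, which discloses nothing. -/
def trivPart (G : Type*) [Fintype G] [DecidableEq G] [Nonempty G] :
    Finpartition (univ : Finset G) :=
  Finpartition.indiscrete Finset.univ_nonempty.ne_empty

/-- `(π, f)` is a pure subgame perfect equilibrium of the two-stage game. -/
def IsSPE (v : B → G → ℕ) (π : S → Finpartition (univ : Finset G))
    (f : (S → Finpartition (univ : Finset G)) → (B → S)) : Prop :=
  (∀ τ, IsNash v τ (f τ)) ∧
  ∀ (s : S) (ρ : Finpartition (univ : Finset G)),
    useller v (Function.update π s ρ) (f (Function.update π s ρ)) s ≤ useller v π (f π) s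

lemma V1_empty (v : B → G → ℕ) (Bb : Finset B) : V1 v Bb ∅ = 0 := by
  simp [V1, vsum]

lemma V2_empty (v : B → G → ℕ) (Bb : Finset B) : V2 v Bb ∅ = 0 := by
  rw [V2]
  split
  · simp only [V1_empty]
    exact Finset.inf'_const _ _
  · rfl

lemma V2_le_V1 [Nonempty B] (v : B → G → ℕ) (Gb : Finset G) :
    V2 v (univ : Finset B) Gb ≤ V1 v (univ : Finset B) Gb := by
  rw [V2, dif_pos Finset.univ_nonempty]
  exact le_trans (Finset.inf'_le _ (mem_univ (Classical.arbitrary B)))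
    (Finset.sup_mono (erase_subset _ _))

lemma one_le_V2 [Nonempty B] (v : B → G → ℕ) {Gb : Finset G} {b b' : B} (hne : b ≠ b')
    (h1 : 1 ≤ vsum v b Gb) (h2 : 1 ≤ vsum v b' Gb) : 1 ≤ V2 v (univ : Finset B) Gb := by
  rw [V2, dif_pos Finset.univ_nonempty]
  apply Finset.le_inf'
  intro c _
  simp only [V1]
  rcases ne_or_eq b c with h | h
  · exact le_trans h1 (Finset.le_sup (f := fun b => vsum v b Gb) (mem_erase.2 ⟨h, mem_univ b⟩))
  · exact le_trans h2 (Finset.le_sup (f := fun b => vsum v b Gb)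
      (mem_erase.2 ⟨fun hb => hne (h.trans hb.symm), mem_univ b'⟩))

lemma demand_card (v : B → G → ℕ) (hv : ∀ b g, v b g ≤ 1) (g : G) :
    (univ.filter (fun b => 1 ≤ v b g)).card = ∑ b, v b g := by
  rw [Finset.card_filter]
  apply Finset.sum_congr rfl
  intro b _
  have := hv b g
  split <;> omega

/-- Pairing lemma: if every `u`-class in `D` has at most `M` elements, then there is a
pairwise-disjoint collection of pairs `{g, g'} ⊆ D` with `u g ≠ u g'` covering all but
at most `M` elements of `D`. -/
lemma pairing_aux (u : G → B) (M : ℕ) :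
    ∀ n (D : Finset G), D.card ≤ n → (∀ b, (D.filter (fun g => u g = b)).card ≤ M) →
    ∃ P : Finset (Finset G),
      (∀ p ∈ P, ∃ g g', g ≠ g' ∧ u g ≠ u g' ∧ p = {g, g'}) ∧
      (∀ p ∈ P, p ⊆ D) ∧
      (P : Set (Finset G)).PairwiseDisjoint id ∧
      D.card ≤ M + 2 * P.card := by
  intro n
  induction n with
  | zero =>
    intro D hD _
    exact ⟨∅, by simp, by simp, by simp, by omega⟩
  | succ n ih =>
    intro D hD hfil
    by_cases hex : ∃ g ∈ D, ∃ g' ∈ D, u g ≠ u g'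
    · obtain ⟨g, hg, g', hg', hu⟩ := hex
      have hne : g ≠ g' := fun h => hu (by rw [h])
      set D' : Finset G := (D.erase g).erase g' with hD'
      have hg'mem : g' ∈ D.erase g := mem_erase.2 ⟨fun h => hne h.symm, hg'⟩
      have hgD' : g ∉ D' := fun h => (mem_erase.1 (mem_erase.1 h).2).1 rfl
      have hg'D' : g' ∉ D' := fun h => (mem_erase.1 h).1 rfl
      have hcard' : D'.card + 2 = D.card := by
        rw [hD', card_erase_of_mem hg'mem, card_erase_of_mem hg]
        have h1 : 1 < D.card := Finset.one_lt_card.2 ⟨g, hg, g', hg', hne⟩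
        omega
      have hD'sub : D' ⊆ D := (erase_subset _ _).trans (erase_subset _ _)
      obtain ⟨P', hP'pairs, hP'sub, hP'disj, hP'card⟩ := ih D' (by omega)
        (fun b => le_trans (card_le_card (filter_subset_filter _ hD'sub)) (hfil b))
      have hpairD' : ({g, g'} : Finset G) ∉ P' := fun h => hgD' (hP'sub _ h (mem_insert_self _ _))
      refine ⟨insert {g, g'} P', ?_, ?_, ?_, ?_⟩
      · intro p hp
        rcases mem_insert.1 hp with h | h
        · exact ⟨g, g', hne, hu, h⟩
        · exact hP'pairs p h
      · intro p hp
        rcases mem_insert.1 hp with h | h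
        · rw [h]; exact insert_subset hg (by simpa using hg')
        · exact (hP'sub p h).trans hD'sub
      · rw [coe_insert]
        refine hP'disj.insert ?_
        intro p hp _
        rw [Finset.disjoint_left]
        intro x hx hxp
        have hxD' : x ∈ D' := hP'sub p hp hxp
        rcases mem_insert.1 hx with h | h
        · exact hgD' (h ▸ hxD')
        · exact hg'D' ((mem_singleton.1 h) ▸ hxD')
      · rw [card_insert_of_notMem hpairD']
        omega
    · push_neg at hex
      refine ⟨∅, by simp, by simp, by simp, ?_⟩
      rcases D.eq_empty_or_nonempty with h | ⟨g₀, hg₀⟩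
      · simp [h]
      · have : D.filter (fun g => u g = u g₀) = D :=
          Finset.filter_true_of_mem (fun g hg => hex g hg g₀ hg₀)
        have h2 := hfil (u g₀)
        rw [this] at h2
        omega

/-- if the trivial partition is revenue-maximizing then
`p¹ + p² ≤ 3·V̄1(B,G)`. -/
theorem trivial_revmax_p1_p2_le [Nonempty B] [Nonempty G]
    (v : B → G → ℕ) (hv : ∀ b g, v b g ≤ 1)
    (htriv : ∀ π' : Finpartition (univ : Finset G), rev1 v π' ≤ rev1 v (trivPart G)) :
    pdem v 1 + pdem v 2 ≤ 3 * V1 v (univ : Finset B) (univ : Finset G) := by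
  classical
  set M := V1 v (univ : Finset B) (univ : Finset G) with hM
  set D1 : Finset G := univ.filter (fun g => (∑ b, v b g) = 1) with hD1
  set D2 : Finset G := univ.filter (fun g => 2 ≤ ∑ b, v b g) with hD2
  -- choose a demander for each good in D1
  have hUex : ∀ g : G, ∃ b : B, g ∈ D1 → 1 ≤ v b g := by
    intro g
    by_cases hg : g ∈ D1
    · have hsum : (∑ b, v b g) = 1 := (mem_filter.1 hg).2
      have hcard : (univ.filter (fun b => 1 ≤ v b g)).card = 1 := by
        rw [demand_card v hv g]; exact hsum
      obtain ⟨b, hb⟩ := Finset.card_pos.1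
        (show 0 < (univ.filter (fun b => 1 ≤ v b g)).card by omega)
      exact ⟨b, fun _ => (mem_filter.1 hb).2⟩
    · exact ⟨Classical.arbitrary B, fun h => absurd h hg⟩
  choose u huspec using hUex
  -- each demander class is at most M
  have hclass : ∀ b : B, (D1.filter (fun g => u g = b)).card ≤ M := by
    intro b
    have hsub : D1.filter (fun g => u g = b) ⊆ univ.filter (fun g => 1 ≤ v b g) := by
      intro g hgm
      have h1 := (mem_filter.1 hgm).1
      have h2 := (mem_filter.1 hgm).2
      exact mem_filter.2 ⟨mem_univ g, h2 ▸ huspec g h1⟩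
    have hcard1 : (univ.filter (fun g => 1 ≤ v b g)).card ≤ ∑ g : G, v b g := by
      have := Finset.card_nsmul_le_sum (univ.filter (fun g => 1 ≤ v b g)) (v b) 1
        (fun g hg => (mem_filter.1 hg).2)
      simpa using le_trans this (Finset.sum_le_sum_of_subset (filter_subset _ _))
    have hvsum : (∑ g : G, v b g) ≤ M := by
      simp only [hM, V1]
      exact Finset.le_sup (f := fun b => vsum v b univ) (mem_univ b)
    exact le_trans (card_le_card hsub) (le_trans hcard1 hvsum)
  obtain ⟨P, hPpairs, hPsub, hPdisj, hPcard⟩ := pairing_aux u M D1.card D1 le_rfl hclass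
  -- the parts
  set R : Finset G := univ \ (D2 ∪ P.sup id) with hR
  set A : Finset (Finset G) := D2.image (fun g => ({g} : Finset G)) with hA
  set parts0 : Finset (Finset G) := A ∪ P ∪ {R} with hparts
  have hD1D2 : ∀ g ∈ D1, g ∉ D2 := by
    intro g hg hg2
    have h1 := (mem_filter.1 hg).2
    have h2 := (mem_filter.1 hg2).2
    omega
  have hPcard2 : ∀ p ∈ P, p.card = 2 := by
    intro p hp
    obtain ⟨g, g', hne, _, rfl⟩ := hPpairs p hp
    rw [card_insert_of_notMem (by simpa using hne), card_singleton]
  have hAnotP : ∀ p ∈ A, p ∉ P := by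
    intro p hp hpP
    obtain ⟨a, _, rfl⟩ := mem_image.1 hp
    have := hPcard2 _ hpP
    simp at this
  have hsubX : ∀ p : Finset G, (p ∈ A ∨ p ∈ P) → p ⊆ D2 ∪ P.sup id := by
    intro p hp
    rcases hp with h | h
    · obtain ⟨a, ha, rfl⟩ := mem_image.1 h
      exact (singleton_subset_iff.2 ha).trans subset_union_left
    · exact (Finset.le_sup (f := id) h).trans subset_union_right
  have hRdisj : ∀ p : Finset G, (p ∈ A ∨ p ∈ P) → Disjoint p R := by
    intro p hp
    rw [Finset.disjoint_left]
    intro x hx hxR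
    exact (mem_sdiff.1 hxR).2 (hsubX p hp hx)
  have hdisj : (parts0 : Set (Finset G)).PairwiseDisjoint id := by
    intro p hp q hq hpq
    simp only [mem_coe, hparts, mem_union, mem_singleton] at hp hq
    have key : ∀ p q : Finset G, (p ∈ A ∨ p ∈ P) → (q ∈ A ∨ q ∈ P) → p ≠ q →
        Disjoint p q := by
      intro p q hp hq hpq
      rcases hp with hp | hp <;> rcases hq with hq | hq
      · obtain ⟨a, ha, rfl⟩ := mem_image.1 hp
        obtain ⟨a', ha', rfl⟩ := mem_image.1 hq
        have : a ≠ a' := fun h => hpq (by rw [h])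
        exact Finset.disjoint_singleton.mpr this
      · obtain ⟨a, ha, rfl⟩ := mem_image.1 hp
        rw [Finset.disjoint_singleton_left]
        intro haq
        exact hD1D2 a (hPsub q hq haq) ha
      · obtain ⟨a, ha, rfl⟩ := mem_image.1 hq
        rw [Finset.disjoint_singleton_right]
        intro hap
        exact hD1D2 a (hPsub p hp hap) ha
      · exact hPdisj hp hq hpq
    rcases hp with hp | hp
    · rcases hq with hq | hq
      · exact key p q hp hq hpq
      · exact hq ▸ hRdisj p hp
    · rcases hq with hq | hq
      · exact (hp ▸ (hRdisj q hq).symm)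
      · exact absurd (hp.trans hq.symm) hpq
  have hsup : parts0.sup id = univ := by
    apply Finset.Subset.antisymm (Finset.sup_le (fun p _ => subset_univ p))
    intro g _
    by_cases hg2 : g ∈ D2
    · have hmem : ({g} : Finset G) ∈ parts0 := by
        rw [hparts]
        exact mem_union_left _ (mem_union_left _ (mem_image_of_mem _ hg2))
      exact (Finset.le_sup (f := id) hmem) (mem_singleton_self g)
    by_cases hgP : g ∈ P.sup id
    · obtain ⟨p, hp, hgp⟩ := Finset.mem_sup.1 hgP
      have hmem : p ∈ parts0 := by
        rw [hparts]; exact mem_union_left _ (mem_union_right _ hp)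
      exact (Finset.le_sup (f := id) hmem) hgp
    · have hgR : g ∈ R := mem_sdiff.2 ⟨mem_univ g, fun h => by
        rcases mem_union.1 h with h | h
        · exact hg2 h
        · exact hgP h⟩
      have hmem : R ∈ parts0 := by rw [hparts]; exact mem_union_right _ (mem_singleton_self R)
      exact (Finset.le_sup (f := id) hmem) hgR
  set π' : Finpartition (univ : Finset G) :=
    Finpartition.ofErase parts0 (Finset.supIndep_iff_pairwiseDisjoint.2 hdisj) hsup with hπ'
  -- revenue comparison
  have hGpos : (0 : ℚ) < (Fintype.card G : ℚ) := by
    exact_mod_cast Fintype.card_pos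
  have hsum_le : ∑ p ∈ π'.parts, (V2 v (univ : Finset B) p : ℚ) ≤
      (V2 v (univ : Finset B) (univ : Finset G) : ℚ) := by
    have h := htriv π'
    rw [rev1, rev1, show (trivPart G).parts = {(univ : Finset G)} from rfl,
      Finset.sum_singleton] at h
    exact le_of_mul_le_mul_left h (inv_pos.2 hGpos)
  have hnat : ∑ p ∈ π'.parts, V2 v (univ : Finset B) p ≤
      V2 v (univ : Finset B) (univ : Finset G) := by
    exact_mod_cast (by push_cast; exact hsum_le :
      ((∑ p ∈ π'.parts, V2 v (univ : Finset B) p : ℕ) : ℚ) ≤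
        (V2 v (univ : Finset B) (univ : Finset G) : ℚ))
  have hparts_eq : π'.parts = parts0.erase ∅ := rfl
  have hsum_eq : ∑ p ∈ parts0.erase ∅, V2 v (univ : Finset B) p =
      ∑ p ∈ parts0, V2 v (univ : Finset B) p :=
    Finset.sum_erase _ (V2_empty v _)
  -- lower bound on the revenue
  have hAP_disj : Disjoint A P := by
    rw [Finset.disjoint_left]; exact hAnotP
  have hsumA : D2.card ≤ ∑ p ∈ A, V2 v (univ : Finset B) p := by
    rw [hA, Finset.sum_image (fun a _ b _ h => Finset.singleton_injective h)]
    have := Finset.card_nsmul_le_sum D2 (fun g => V2 v (univ : Finset B) {g}) 1 ?_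
    · simpa using this
    · intro g hg
      have h2 : 2 ≤ ∑ b, v b g := (mem_filter.1 hg).2
      have hcard : 1 < (univ.filter (fun b => 1 ≤ v b g)).card := by
        rw [demand_card v hv g]; omega
      obtain ⟨b, hb, b', hb', hbb'⟩ := Finset.one_lt_card.1 hcard
      refine one_le_V2 v hbb' ?_ ?_ <;>
        simp only [vsum, Finset.sum_singleton]
      · exact (mem_filter.1 hb).2
      · exact (mem_filter.1 hb').2
  have hsumP : P.card ≤ ∑ p ∈ P, V2 v (univ : Finset B) p := by
    have := Finset.card_nsmul_le_sum P (fun p => V2 v (univ : Finset B) p) 1 ?_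
    · simpa using this
    · intro p hp
      obtain ⟨g, g', hne, hu, rfl⟩ := hPpairs p hp
      have hg : g ∈ D1 := hPsub _ hp (mem_insert_self _ _)
      have hg' : g' ∈ D1 := hPsub _ hp (by simp)
      refine one_le_V2 v hu ?_ ?_ <;> rw [vsum, Finset.sum_pair hne]
      · have := huspec g hg; omega
      · have := huspec g' hg'; omega
  have hlow : D2.card + P.card ≤ ∑ p ∈ parts0, V2 v (univ : Finset B) p := by
    calc D2.card + P.card ≤ ∑ p ∈ A ∪ P, V2 v (univ : Finset B) p := by
          rw [Finset.sum_union hAP_disj]; exact Nat.add_le_add hsumA hsumP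
      _ ≤ ∑ p ∈ parts0, V2 v (univ : Finset B) p := by
          apply Finset.sum_le_sum_of_subset
          rw [hparts]; exact subset_union_left
  -- wrap up
  have hkey : D2.card + P.card ≤ M := by
    have h1 : D2.card + P.card ≤ V2 v (univ : Finset B) (univ : Finset G) := by
      rw [hparts_eq] at hnat; rw [← hsum_eq] at hlow; omega
    exact le_trans h1 (V2_le_V1 v univ)
  have hp1 : pdem v 1 = D1.card + D2.card := by
    rw [pdem]
    have hsplit : univ.filter (fun g : G => 1 ≤ ∑ b, v b g) = D1 ∪ D2 := by
      rw [hD1, hD2, ← Finset.filter_or]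
      apply Finset.filter_congr
      intro g _
      constructor
      · intro h; omega
      · intro h; omega
    rw [hsplit, Finset.card_union_of_disjoint]
    rw [Finset.disjoint_left]
    exact hD1D2
  have hp2 : pdem v 2 = D2.card := by rw [pdem, hD2]
  omega
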